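/- The contour integral (1/(2πi)) ∫_{Γ(1)} z^{-3/2} e^z dz equals 2/√π, where Γ(1) is the contour {1 - s + is : s ≥ 0} ∪ {1 - s - is : s ≥ 0} traversed with increasing imaginary part and z^{-3/2} uses the principal branch. -/

import Mathlib

open MeasureTheory Complex Filter Topology





noncomputable def Eprim (z : ℂ) : ℂ := ∫ t in Set.Ioc (0:ℝ) 1, z * Complex.exp ((t:ℂ)^2 * z^2)

lemma Eprim_zero : Eprim 0 = 0 := by simp [Eprim]

lemma Eprim_neg (z : ℂ) : Eprim (-z) = - Eprim z := by
  simp [Eprim, neg_sq, neg_mul, integral_neg]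

lemma hasDerivAt_Eprim (z : ℂ) : HasDerivAt Eprim (Complex.exp (z^2)) z := by
  have key := hasDerivAt_integral_of_dominated_loc_of_deriv_le
    (𝕜 := ℂ) (μ := volume.restrict (Set.Ioc (0:ℝ) 1))
    (F := fun (x : ℂ) (t : ℝ) => x * Complex.exp ((t:ℂ)^2 * x^2))
    (F' := fun (x : ℂ) (t : ℝ) => (1 + 2*(t:ℂ)^2*x^2) * Complex.exp ((t:ℂ)^2 * x^2))
    (x₀ := z) (s := Metric.ball z 1)
    (bound := fun _ => (1 + 2*(‖z‖+1)^2) * Real.exp ((‖z‖+1)^2))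
    (Metric.ball_mem_nhds z one_pos) ?_ ?_ ?_ ?_ ?_ ?_
  · have h2 : (∫ t in Set.Ioc (0:ℝ) 1, (1 + 2*(t:ℂ)^2*z^2) * Complex.exp ((t:ℂ)^2 * z^2))
        = Complex.exp (z^2) := by
      rw [← intervalIntegral.integral_of_le zero_le_one]
      have : ∀ t ∈ Set.uIcc (0:ℝ) 1, HasDerivAt (fun t : ℝ => (t:ℂ) * Complex.exp ((t:ℂ)^2 * z^2))
          ((1 + 2*(t:ℂ)^2*z^2) * Complex.exp ((t:ℂ)^2 * z^2)) t := by
        intro t _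
        have h1 : HasDerivAt (fun t : ℝ => (t:ℂ)) 1 t := by
          simpa using (hasDerivAt_id t).ofReal_comp
        have hsq' := (h1.mul h1).mul_const (z^2)
        have hsq : HasDerivAt (fun t : ℝ => (t:ℂ)^2 * z^2) ((1*(t:ℂ)+(t:ℂ)*1) * z^2) t :=
          hsq'.congr_of_eventuallyEq (Filter.Eventually.of_forall fun y => by simp only [Pi.mul_apply]; ring)
        have hexp := hsq.cexp
        have := h1.mul hexp
        refine this.congr_deriv ?_
        ring
      have hint : IntervalIntegrable
          (fun t : ℝ => (1 + 2*(t:ℂ)^2*z^2) * Complex.exp ((t:ℂ)^2 * z^2)) volume 0 1 := by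
        apply Continuous.intervalIntegrable
        fun_prop
      have := intervalIntegral.integral_eq_sub_of_hasDerivAt this hint
      rw [this]
      norm_num
    rw [h2] at key
    exact key.2
  · filter_upwards with x
    apply Continuous.aestronglyMeasurable
    fun_prop
  · apply Integrable.mono' (g := fun _ : ℝ => ‖z‖ * Real.exp (‖z‖^2))
    · exact ((integrableOn_const_iff).mpr (Or.inr measure_Ioc_lt_top))
    · apply Continuous.aestronglyMeasurable; fun_prop
    · rw [ae_restrict_iff' measurableSet_Ioc]
      filter_upwards with t ht
      rw [norm_mul]
      gcongr
      · rw [Complex.norm_exp]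
        apply Real.exp_le_exp.2
        calc ((t:ℂ)^2 * z^2).re ≤ ‖(t:ℂ)^2 * z^2‖ := Complex.re_le_norm _
          _ = t^2 * ‖z‖^2 := by
              rw [norm_mul, norm_pow, norm_pow, Complex.norm_real, Real.norm_eq_abs,
                _root_.abs_of_nonneg ht.1.le]
          _ ≤ 1 * ‖z‖^2 := by
              apply mul_le_mul_of_nonneg_right (by nlinarith [ht.1.le, ht.2]) (by positivity)
          _ = ‖z‖^2 := one_mul _
  · apply Continuous.aestronglyMeasurable; fun_prop
  · rw [ae_restrict_iff' measurableSet_Ioc]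
    filter_upwards with t ht x hx
    have hxn : ‖x‖ ≤ ‖z‖ + 1 := by
      have := mem_ball_iff_norm.mp hx
      have := norm_sub_norm_le x z
      linarith [le_of_lt (mem_ball_iff_norm.mp hx)]
    have ht2 : t^2 ≤ 1 := by nlinarith [ht.1.le, ht.2]
    have hb : ‖(t:ℂ)^2 * x^2‖ ≤ (‖z‖+1)^2 := by
      rw [norm_mul, norm_pow, norm_pow, Complex.norm_real, Real.norm_eq_abs,
        _root_.abs_of_nonneg ht.1.le]
      calc t^2 * ‖x‖^2 ≤ 1 * (‖z‖+1)^2 := by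
            apply mul_le_mul ht2 (by nlinarith [norm_nonneg x]) (by positivity) one_pos.le
        _ = (‖z‖+1)^2 := one_mul _
    rw [norm_mul]
    gcongr
    · calc ‖1 + 2*(t:ℂ)^2*x^2‖ ≤ ‖(1:ℂ)‖ + ‖2*(t:ℂ)^2*x^2‖ := norm_add_le _ _
        _ ≤ 1 + 2*(‖z‖+1)^2 := by
            rw [norm_one]
            gcongr
            rw [show (2:ℂ)*(t:ℂ)^2*x^2 = 2*((t:ℂ)^2*x^2) by ring, norm_mul]
            simpa using hb
    · rw [Complex.norm_exp]
      exact Real.exp_le_exp.2 ((Complex.re_le_norm _).trans hb)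
  · exact ((integrableOn_const_iff).mpr (Or.inr measure_Ioc_lt_top))
  · rw [ae_restrict_iff' measurableSet_Ioc]
    filter_upwards with t ht x hx
    have h1 : HasDerivAt (fun x : ℂ => x) 1 x := hasDerivAt_id x
    have hsq : HasDerivAt (fun x : ℂ => (t:ℂ)^2 * x^2) ((t:ℂ)^2 * (2*x^1)) x :=
      (hasDerivAt_pow 2 x).const_mul ((t:ℂ)^2)
    have hexp := hsq.cexp
    have := h1.mul hexp
    refine this.congr_deriv ?_
    ring

lemma Eprim_I_mul (y : ℝ) :
    Eprim (↑y * Complex.I) = (↑(∫ u in (0:ℝ)..y, Real.exp (-u^2)) : ℂ) * Complex.I := by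
  have h : ∀ u ∈ Set.uIcc (0:ℝ) y, HasDerivAt (fun v : ℝ => Eprim (↑v * Complex.I))
      ((fun u : ℝ => (↑(Real.exp (-u^2)) : ℂ) * Complex.I) u) u := by
    intro u _
    have h1 : HasDerivAt (fun v : ℝ => (↑v : ℂ) * Complex.I) Complex.I u := by
      simpa using ((hasDerivAt_id u).ofReal_comp.mul_const Complex.I)
    have h2 := (hasDerivAt_Eprim (↑u * Complex.I)).comp u h1
    refine h2.congr_deriv ?_
    have h3 : ((u:ℂ) * Complex.I)^2 = ((-u^2 : ℝ) : ℂ) := by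
      push_cast
      rw [mul_pow, Complex.I_sq]
      ring
    rw [h3, ← Complex.ofReal_exp]
  have hint : IntervalIntegrable (fun u : ℝ => (↑(Real.exp (-u^2)) : ℂ) * Complex.I)
      MeasureTheory.volume 0 y := by
    apply Continuous.intervalIntegrable
    fun_prop
  have key := intervalIntegral.integral_eq_sub_of_hasDerivAt h hint
  rw [intervalIntegral.integral_mul_const, intervalIntegral.integral_ofReal] at key
  simp only [Complex.ofReal_zero, zero_mul, Eprim_zero, sub_zero] at key
  exact key.symm

lemma tendsto_gauss_atTop :
    Tendsto (fun y : ℝ => ∫ u in (0:ℝ)..y, Real.exp (-u^2)) atTop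
      (𝓝 (Real.sqrt Real.pi / 2)) := by
  have hi : IntegrableOn (fun u : ℝ => Real.exp (-u^2)) (Set.Ioi 0) := by
    have := (integrable_exp_neg_mul_sq (one_pos)).integrableOn (s := Set.Ioi (0:ℝ))
    simpa using this
  have := intervalIntegral_tendsto_integral_Ioi 0 hi tendsto_id
  have h2 : ∫ u in Set.Ioi (0:ℝ), Real.exp (-u^2) = Real.sqrt Real.pi / 2 := by
    have := integral_gaussian_Ioi 1
    simpa using this
  rw [h2] at this
  exact this

lemma tendsto_Eprim_I_atTop :
    Tendsto (fun y : ℝ => Eprim (↑y * Complex.I)) atTop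
      (𝓝 ((↑(Real.sqrt Real.pi / 2) : ℂ) * Complex.I)) := by
  simp only [Eprim_I_mul]
  exact ((Complex.continuous_ofReal.tendsto _).comp tendsto_gauss_atTop).mul_const Complex.I

lemma tendsto_Eprim_I_atBot :
    Tendsto (fun y : ℝ => Eprim (↑y * Complex.I)) atBot
      (𝓝 (-((↑(Real.sqrt Real.pi / 2) : ℂ) * Complex.I))) := by
  have h1 : Tendsto (fun y : ℝ => Eprim (↑(-y) * Complex.I)) atBot
      (𝓝 ((↑(Real.sqrt Real.pi / 2) : ℂ) * Complex.I)) :=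
    tendsto_Eprim_I_atTop.comp tendsto_neg_atBot_atTop
  have h2 := h1.neg
  refine h2.congr fun y => ?_
  rw [← Eprim_neg]
  push_cast
  ring_nf

lemma Eprim_seg (p : ℂ) (hp : 0 ≤ p.re) :
    ‖Eprim p - Eprim (↑p.im * Complex.I)‖ ≤ p.re * Real.exp (p.re^2 - p.im^2) := by
  have h : ∀ x ∈ Set.uIcc (0:ℝ) p.re, HasDerivAt (fun x : ℝ => Eprim (↑x + ↑p.im * Complex.I))
      ((fun x : ℝ => Complex.exp ((↑x + ↑p.im * Complex.I)^2)) x) x := by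
    intro x _
    have h1 : HasDerivAt (fun x : ℝ => (↑x:ℂ) + ↑p.im * Complex.I) 1 x := by
      simpa using ((hasDerivAt_id x).ofReal_comp.add_const ((p.im : ℂ) * Complex.I))
    have h2 := (hasDerivAt_Eprim _).comp x h1
    rw [mul_one] at h2
    exact h2
  have hint : IntervalIntegrable (fun x : ℝ => Complex.exp ((↑x + ↑p.im * Complex.I)^2))
      MeasureTheory.volume 0 p.re := by
    apply Continuous.intervalIntegrable
    fun_prop
  have key := intervalIntegral.integral_eq_sub_of_hasDerivAt h hint
  simp only [Complex.ofReal_zero, zero_add] at key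
  rw [Complex.re_add_im p] at key
  have hb : ∀ x ∈ Set.uIoc (0:ℝ) p.re,
      ‖Complex.exp ((↑x + ↑p.im * Complex.I)^2)‖ ≤ Real.exp (p.re^2 - p.im^2) := by
    intro x hx
    rw [Set.uIoc_of_le hp] at hx
    rw [Complex.norm_exp]
    apply Real.exp_le_exp.2
    have hre : (((x:ℂ) + (p.im:ℂ) * Complex.I)^2).re = x^2 - p.im^2 := by
      simp [pow_two, Complex.mul_re, Complex.add_re, Complex.add_im, Complex.mul_im]
    rw [hre]
    nlinarith [hx.1, hx.2]
  have := intervalIntegral.norm_integral_le_of_norm_le_const hb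
  rw [key] at this
  calc ‖Eprim p - Eprim (↑p.im * Complex.I)‖ ≤ Real.exp (p.re^2 - p.im^2) * |p.re - 0| := this
    _ = p.re * Real.exp (p.re^2 - p.im^2) := by
        rw [sub_zero, _root_.abs_of_nonneg hp, mul_comm]

lemma sqrt_mul_self' (z : ℂ) (hz : z ≠ 0) : z^(1/2:ℂ) * z^(1/2:ℂ) = z := by
  rw [← Complex.cpow_add _ _ hz]
  norm_num

lemma sqrt_re_nonneg' (z : ℂ) : 0 ≤ (z^(1/2:ℂ)).re := by
  rcases eq_or_ne z 0 with h | h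
  · simp [h, Complex.zero_cpow (show (1/2:ℂ) ≠ 0 by norm_num)]
  · rw [Complex.cpow_def_of_ne_zero h, Complex.exp_re]
    apply mul_nonneg (Real.exp_nonneg _)
    have him : (Complex.log z * (1/2)).im = z.arg / 2 := by
      simp [Complex.mul_im, Complex.log_im]
      ring
    rw [him]
    apply Real.cos_nonneg_of_mem_Icc
    constructor
    · nlinarith [Complex.neg_pi_lt_arg z, Real.pi_pos]
    · nlinarith [Complex.arg_le_pi z, Real.pi_pos]

lemma sqrt_abs' (z : ℂ) : ‖z^(1/2:ℂ)‖ = Real.sqrt ‖z‖ := by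
  rcases eq_or_ne z 0 with h | h
  · simp [h, Complex.zero_cpow (show (1/2:ℂ) ≠ 0 by norm_num)]
  · rw [Complex.norm_cpow_of_ne_zero h]
    norm_num [Real.sqrt_eq_rpow]

lemma sqrt_sq_re' (z : ℂ) (hz : z ≠ 0) :
    ((z^(1/2:ℂ)).re)^2 - ((z^(1/2:ℂ)).im)^2 = z.re := by
  have h := congrArg Complex.re (sqrt_mul_self' z hz)
  rw [Complex.mul_re] at h
  nlinarith [h]

lemma sqrt_sq_im' (z : ℂ) (hz : z ≠ 0) :
    2 * (z^(1/2:ℂ)).re * (z^(1/2:ℂ)).im = z.im := by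
  have h := congrArg Complex.im (sqrt_mul_self' z hz)
  rw [Complex.mul_im] at h
  nlinarith [h]

lemma sqrt_im_neg' (z : ℂ) (hz : z.im < 0) : (z^(1/2:ℂ)).im < 0 := by
  have hz0 : z ≠ 0 := fun h => by simp [h] at hz
  have h := sqrt_sq_im' z hz0
  have hre := sqrt_re_nonneg' z
  nlinarith

lemma sqrt_im_pos' (z : ℂ) (hz : 0 < z.im) : 0 < (z^(1/2:ℂ)).im := by
  have hz0 : z ≠ 0 := fun h => by simp [h] at hz
  have h := sqrt_sq_im' z hz0
  have hre := sqrt_re_nonneg' z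
  nlinarith

lemma tendsto_sqrt_atTop' : Tendsto Real.sqrt atTop atTop := by
  have h := tendsto_rpow_atTop (show (0:ℝ) < 1/2 by norm_num)
  exact h.congr fun x => (Real.sqrt_eq_rpow x).symm

/-- Generic ray limit: if `z s` has `re (z s) = 1 - s` and `|im (z s)| = s`,
with constant sign `ε` of the imaginary part. -/
lemma tendsto_Eprim_sqrt (z : ℝ → ℂ) (hre : ∀ s, (z s).re = 1 - s)
    (him : ∀ s, (z s).im = -s) :
    Tendsto (fun s : ℝ => Eprim ((z s)^(1/2:ℂ))) atTop
      (𝓝 (-((↑(Real.sqrt Real.pi / 2) : ℂ) * Complex.I))) := by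
  set p : ℝ → ℂ := fun s => (z s)^(1/2:ℂ) with hp
  have hzne : ∀ s : ℝ, 0 < s → z s ≠ 0 := by
    intro s hs h
    have := him s
    rw [h] at this
    simp at this
    linarith
  -- imaginary parts tend to -∞
  have him_t : Tendsto (fun s => (p s).im) atTop atBot := by
    apply tendsto_atBot_mono' atTop (f₁ := fun s => -Real.sqrt (s-1))
    · filter_upwards [eventually_ge_atTop (1:ℝ)] with s hs
      have hzne' := hzne s (by linarith)
      have h1 : (p s).im < 0 := sqrt_im_neg' (z s) (by rw [him s]; linarith)
      have h2 : ((p s).re)^2 - ((p s).im)^2 = 1 - s := by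
        rw [hp]; rw [sqrt_sq_re' (z s) hzne', hre s]
      have h3 : s - 1 ≤ ((p s).im)^2 := by nlinarith [sq_nonneg ((p s).re)]
      have h4 : Real.sqrt (s-1) ≤ -(p s).im := by
        rw [show ((p s).im)^2 = (-(p s).im)^2 by ring] at h3
        calc Real.sqrt (s-1) ≤ Real.sqrt ((-(p s).im)^2) := Real.sqrt_le_sqrt h3
          _ = -(p s).im := Real.sqrt_sq (by linarith)
      linarith
    · exact tendsto_neg_atTop_atBot.comp
        (tendsto_sqrt_atTop'.comp (tendsto_atTop_add_const_right _ (-1) tendsto_id))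
  have h2 : Tendsto (fun s => Eprim (↑(p s).im * Complex.I)) atTop
      (𝓝 (-((↑(Real.sqrt Real.pi / 2) : ℂ) * Complex.I))) :=
    tendsto_Eprim_I_atBot.comp him_t
  have h1 : Tendsto (fun s => Eprim (p s) - Eprim (↑(p s).im * Complex.I)) atTop (𝓝 0) := by
    apply squeeze_zero_norm' (a := fun s : ℝ => (1 + 2*s) * Real.exp (1 - s))
      (f := fun s => Eprim (p s) - Eprim (↑(p s).im * Complex.I))
    · filter_upwards [eventually_ge_atTop (1:ℝ)] with s hs
      have hzne' := hzne s (by linarith)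
      have hseg := Eprim_seg (p s) (sqrt_re_nonneg' (z s))
      have h2 : ((p s).re)^2 - ((p s).im)^2 = 1 - s := by
        rw [hp]; rw [sqrt_sq_re' (z s) hzne', hre s]
      rw [h2] at hseg
      refine hseg.trans ?_
      have habs : ‖z s‖ ≤ 1 + 2*s := by
        calc ‖z s‖ ≤ |(z s).re| + |(z s).im| := Complex.norm_le_abs_re_add_abs_im _
          _ ≤ 1 + 2*s := by
              rw [hre s, him s, abs_neg, _root_.abs_of_nonneg (by linarith : (0:ℝ) ≤ s),
                _root_.abs_of_nonpos (by linarith : 1 - s ≤ 0)]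
              linarith
      have hple : (p s).re ≤ 1 + 2*s := by
        calc (p s).re ≤ |(p s).re| := le_abs_self _
          _ ≤ ‖p s‖ := Complex.abs_re_le_norm _
          _ = Real.sqrt (‖z s‖) := sqrt_abs' _
          _ ≤ Real.sqrt (1 + 2*s) := Real.sqrt_le_sqrt habs
          _ ≤ Real.sqrt ((1 + 2*s)^2) := Real.sqrt_le_sqrt (by nlinarith)
          _ = 1 + 2*s := Real.sqrt_sq (by linarith)
      exact mul_le_mul_of_nonneg_right hple (Real.exp_nonneg _)
    · have : (fun s : ℝ => (1 + 2*s) * Real.exp (1 - s)) =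
          fun s : ℝ => Real.exp 1 * (Real.exp (-s) + 2 * (s * Real.exp (-s))) := by
        funext s
        rw [show (1:ℝ) - s = 1 + -s by ring, Real.exp_add]
        ring
      rw [this]
      have hg : Tendsto (fun s : ℝ => Real.exp (-s) + 2 * (s * Real.exp (-s))) atTop (𝓝 (0 + 2*0)) := by
        apply Tendsto.add Real.tendsto_exp_neg_atTop_nhds_zero
        apply Tendsto.const_mul
        have := Real.tendsto_pow_mul_exp_neg_atTop_nhds_zero 1
        simpa using this
      have := hg.const_mul (Real.exp 1)
      simpa using this
  have := h1.add h2
  rw [zero_add] at this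
  apply this.congr
  intro s
  ring

lemma tendsto_Eprim_sqrt_up (z : ℝ → ℂ) (hre : ∀ s, (z s).re = 1 - s)
    (him : ∀ s, (z s).im = s) :
    Tendsto (fun s : ℝ => Eprim ((z s)^(1/2:ℂ))) atTop
      (𝓝 ((↑(Real.sqrt Real.pi / 2) : ℂ) * Complex.I)) := by
  set p : ℝ → ℂ := fun s => (z s)^(1/2:ℂ) with hp
  have hzne : ∀ s : ℝ, 0 < s → z s ≠ 0 := by
    intro s hs h
    have := him s
    rw [h] at this
    simp at this
    linarith
  have him_t : Tendsto (fun s => (p s).im) atTop atTop := by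
    apply tendsto_atTop_mono' atTop (f₁ := fun s => Real.sqrt (s-1))
    · filter_upwards [eventually_ge_atTop (1:ℝ)] with s hs
      have hzne' := hzne s (by linarith)
      have h1 : 0 < (p s).im := sqrt_im_pos' (z s) (by rw [him s]; linarith)
      have h2 : ((p s).re)^2 - ((p s).im)^2 = 1 - s := by
        rw [hp]; rw [sqrt_sq_re' (z s) hzne', hre s]
      have h3 : s - 1 ≤ ((p s).im)^2 := by nlinarith [sq_nonneg ((p s).re)]
      calc Real.sqrt (s-1) ≤ Real.sqrt (((p s).im)^2) := Real.sqrt_le_sqrt h3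
        _ = (p s).im := Real.sqrt_sq h1.le
    · exact tendsto_sqrt_atTop'.comp (tendsto_atTop_add_const_right _ (-1) tendsto_id)
  have h2 : Tendsto (fun s => Eprim (↑(p s).im * Complex.I)) atTop
      (𝓝 ((↑(Real.sqrt Real.pi / 2) : ℂ) * Complex.I)) :=
    tendsto_Eprim_I_atTop.comp him_t
  have h1 : Tendsto (fun s => Eprim (p s) - Eprim (↑(p s).im * Complex.I)) atTop (𝓝 0) := by
    apply squeeze_zero_norm' (a := fun s : ℝ => (1 + 2*s) * Real.exp (1 - s))
      (f := fun s => Eprim (p s) - Eprim (↑(p s).im * Complex.I))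
    · filter_upwards [eventually_ge_atTop (1:ℝ)] with s hs
      have hzne' := hzne s (by linarith)
      have hseg := Eprim_seg (p s) (sqrt_re_nonneg' (z s))
      have h2 : ((p s).re)^2 - ((p s).im)^2 = 1 - s := by
        rw [hp]; rw [sqrt_sq_re' (z s) hzne', hre s]
      rw [h2] at hseg
      refine hseg.trans ?_
      have habs : ‖z s‖ ≤ 1 + 2*s := by
        calc ‖z s‖ ≤ |(z s).re| + |(z s).im| := Complex.norm_le_abs_re_add_abs_im _
          _ ≤ 1 + 2*s := by
              rw [hre s, him s, _root_.abs_of_nonneg (by linarith : (0:ℝ) ≤ s),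
                _root_.abs_of_nonpos (by linarith : 1 - s ≤ 0)]
              linarith
      have hple : (p s).re ≤ 1 + 2*s := by
        calc (p s).re ≤ |(p s).re| := le_abs_self _
          _ ≤ ‖p s‖ := Complex.abs_re_le_norm _
          _ = Real.sqrt (‖z s‖) := sqrt_abs' _
          _ ≤ Real.sqrt (1 + 2*s) := Real.sqrt_le_sqrt habs
          _ ≤ Real.sqrt ((1 + 2*s)^2) := Real.sqrt_le_sqrt (by nlinarith)
          _ = 1 + 2*s := Real.sqrt_sq (by linarith)
      exact mul_le_mul_of_nonneg_right hple (Real.exp_nonneg _)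
    · have : (fun s : ℝ => (1 + 2*s) * Real.exp (1 - s)) =
          fun s : ℝ => Real.exp 1 * (Real.exp (-s) + 2 * (s * Real.exp (-s))) := by
        funext s
        rw [show (1:ℝ) - s = 1 + -s by ring, Real.exp_add]
        ring
      rw [this]
      have hg : Tendsto (fun s : ℝ => Real.exp (-s) + 2 * (s * Real.exp (-s))) atTop (𝓝 (0 + 2*0)) := by
        apply Tendsto.add Real.tendsto_exp_neg_atTop_nhds_zero
        apply Tendsto.const_mul
        have := Real.tendsto_pow_mul_exp_neg_atTop_nhds_zero 1
        simpa using this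
      have := hg.const_mul (Real.exp 1)
      simpa using this
  have := h1.add h2
  rw [zero_add] at this
  apply this.congr
  intro s
  ring

lemma tendsto_Eprim_sqrt_lower :
    Tendsto (fun s : ℝ => Eprim (((1:ℂ) - ↑s - ↑s * Complex.I)^(1/2:ℂ))) atTop
      (𝓝 (-((↑(Real.sqrt Real.pi / 2) : ℂ) * Complex.I))) := by
  apply tendsto_Eprim_sqrt (fun s : ℝ => (1:ℂ) - ↑s - ↑s * Complex.I)
  · intro s; simp
  · intro s; simp

lemma tendsto_Eprim_sqrt_upper :
    Tendsto (fun s : ℝ => Eprim (((1:ℂ) - ↑s + ↑s * Complex.I)^(1/2:ℂ))) atTop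
      (𝓝 ((↑(Real.sqrt Real.pi / 2) : ℂ) * Complex.I)) := by
  apply tendsto_Eprim_sqrt_up (fun s : ℝ => (1:ℂ) - ↑s + ↑s * Complex.I)
  · intro s; simp
  · intro s; simp


namespace Lower

noncomputable def z (s : ℝ) : ℂ := (1:ℂ) - ↑s - ↑s * Complex.I

lemma z_re (s : ℝ) : (z s).re = 1 - s := by simp [z]
lemma z_im (s : ℝ) : (z s).im = -s := by simp [z]

lemma z_slit {s : ℝ} (hs : 0 ≤ s) : z s ∈ Complex.slitPlane := by
  rw [Complex.mem_slitPlane_iff, z_re, z_im]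
  rcases eq_or_lt_of_le hs with h | h
  · left; rw [← h]; norm_num
  · right; intro h'; rw [neg_eq_zero] at h'; exact h.ne' h'

lemma z_ne {s : ℝ} (hs : 0 ≤ s) : z s ≠ 0 := Complex.slitPlane_ne_zero (z_slit hs)

lemma z_abs_ge {s : ℝ} (hs : 0 ≤ s) : (1:ℝ)/2 ≤ ‖z s‖ := by
  rcases le_total s (1/2) with h | h
  · calc (1:ℝ)/2 ≤ |(z s).re| := by rw [z_re]; rw [_root_.abs_of_nonneg]; linarith; linarith
      _ ≤ ‖z s‖ := Complex.abs_re_le_norm _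
  · calc (1:ℝ)/2 ≤ |(z s).im| := by rw [z_im, abs_neg, _root_.abs_of_nonneg hs]; linarith
      _ ≤ ‖z s‖ := Complex.abs_im_le_norm _

lemma hasDerivAt_z (s : ℝ) : HasDerivAt z (-1 - Complex.I) s := by
  have h0 : HasDerivAt (fun s : ℝ => (↑s : ℂ)) 1 s := by
    simpa using (hasDerivAt_id s).ofReal_comp
  have := (h0.const_sub 1).sub (h0.mul_const Complex.I)
  rw [one_mul] at this
  exact this

lemma norm_cpow_le {s : ℝ} (hs : 0 ≤ s) {c : ℝ} (hc : c ≤ 0) (hc2 : -2 ≤ c) :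
    ‖(z s) ^ (c : ℂ)‖ ≤ 4 := by
  rw [Complex.norm_cpow_of_ne_zero (z_ne hs)]
  simp only [Complex.ofReal_im, Complex.ofReal_re, mul_zero, Real.exp_zero, div_one]
  calc ‖z s‖ ^ c ≤ ((1:ℝ)/2) ^ c :=
        Real.rpow_le_rpow_of_nonpos (by norm_num) (z_abs_ge hs) hc
    _ ≤ ((1:ℝ)/2) ^ (-2 : ℝ) :=
        Real.rpow_le_rpow_of_exponent_ge (by norm_num) (by norm_num) hc2
    _ ≤ 4 := by
        rw [show (-2:ℝ) = ((-2 : ℤ) : ℝ) by norm_num, Real.rpow_intCast]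
        norm_num

lemma norm_integrand_le {s : ℝ} (hs : 0 ≤ s) :
    ‖(z s) ^ (-(3/2) : ℂ) * Complex.exp (z s) * (1 + Complex.I)‖
      ≤ (8 * Real.exp 1) * Real.exp (-s) := by
  rw [norm_mul, norm_mul]
  have h1 : ‖(z s) ^ (-(3/2) : ℂ)‖ ≤ 4 := by
    have := norm_cpow_le hs (c := -(3/2)) (by norm_num) (by norm_num)
    simpa using this
  have h2 : ‖Complex.exp (z s)‖ = Real.exp 1 * Real.exp (-s) := by
    rw [Complex.norm_exp, z_re, ← Real.exp_add]
    ring_nf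
  have h3 : ‖(1 + Complex.I)‖ ≤ 2 := by
    calc ‖(1 + Complex.I)‖ ≤ ‖(1:ℂ)‖ + ‖Complex.I‖ := norm_add_le _ _
      _ = 2 := by norm_num
  calc ‖(z s) ^ (-(3/2) : ℂ)‖ * ‖Complex.exp (z s)‖ * ‖(1 + Complex.I)‖
      ≤ 4 * (Real.exp 1 * Real.exp (-s)) * 2 := by
        apply mul_le_mul _ h3 (norm_nonneg _) (by positivity)
        apply mul_le_mul h1 h2.le (norm_nonneg _) (by positivity)
    _ = (8 * Real.exp 1) * Real.exp (-s) := by ring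

lemma integrand_integrable :
    IntegrableOn (fun s : ℝ => (z s) ^ (-(3/2) : ℂ) * Complex.exp (z s) * (1 + Complex.I))
      (Set.Ioi (0:ℝ)) := by
  apply Integrable.mono' (g := fun s : ℝ => (8 * Real.exp 1) * Real.exp (-s))
  · have : IntegrableOn (fun s : ℝ => Real.exp (-s)) (Set.Ioi (0:ℝ)) := by
      have := exp_neg_integrableOn_Ioi 0 (one_pos)
      simpa using this
    exact this.const_mul _
  · apply ContinuousOn.aestronglyMeasurable _ measurableSet_Ioi
    intro s hs
    have hs' : (0:ℝ) ≤ s := (Set.mem_Ioi.mp hs).le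
    apply ContinuousWithinAt.mul
    apply ContinuousWithinAt.mul
    · exact ((continuousAt_cpow_const (z_slit hs')).comp
        (hasDerivAt_z s).continuousAt).continuousWithinAt
    · exact ((hasDerivAt_z s).continuousAt.cexp).continuousWithinAt
    · exact continuousWithinAt_const
  · rw [ae_restrict_iff' measurableSet_Ioi]
    filter_upwards with s hs
    exact norm_integrand_le (Set.mem_Ioi.mp hs).le

noncomputable def G (s : ℝ) : ℂ :=
  2 * ((z s) ^ (-(1/2) : ℂ) * Complex.exp (z s)) - 4 * Eprim ((z s) ^ ((1/2) : ℂ))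

lemma hasDerivAt_G {s : ℝ} (hs : 0 ≤ s) :
    HasDerivAt G ((z s) ^ (-(3/2) : ℂ) * Complex.exp (z s) * (1 + Complex.I)) s := by
  have hz := hasDerivAt_z s
  have hslit := z_slit hs
  have hne := z_ne hs
  have h1 : HasDerivAt (fun t : ℝ => z t ^ (-(1/2) : ℂ))
      (-(1/2) * z s ^ (-(1/2) - 1 : ℂ) * (-1 - Complex.I)) s :=
    (Complex.hasStrictDerivAt_cpow_const (c := -(1/2)) hslit).hasDerivAt.comp s hz
  have h2 := hz.cexp
  have h3 : HasDerivAt (fun t : ℝ => z t ^ ((1/2) : ℂ))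
      ((1/2) * z s ^ ((1/2) - 1 : ℂ) * (-1 - Complex.I)) s :=
    (Complex.hasStrictDerivAt_cpow_const (c := (1/2)) hslit).hasDerivAt.comp s hz
  have h4 := (hasDerivAt_Eprim ((z s) ^ ((1/2) : ℂ))).comp s h3
  have h5 := ((h1.mul h2).const_mul (2:ℂ)).sub (h4.const_mul (4:ℂ))
  have key : HasDerivAt G
      (2 * (-(1/2) * z s ^ (-(1/2) - 1 : ℂ) * (-1 - Complex.I) * Complex.exp (z s)
          + z s ^ (-(1/2) : ℂ) * (Complex.exp (z s) * (-1 - Complex.I)))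
        - 4 * (Complex.exp ((z s ^ ((1/2):ℂ)) ^ 2) * ((1/2) * z s ^ ((1/2) - 1 : ℂ) * (-1 - Complex.I)))) s := h5
  have e1 : (-(1/2) : ℂ) - 1 = -(3/2) := by norm_num
  have e2 : ((1/2) : ℂ) - 1 = -(1/2) := by norm_num
  have e3 : ((z s) ^ ((1/2):ℂ)) ^ 2 = z s := by
    rw [pow_two, ← Complex.cpow_add _ _ hne]
    norm_num
  rw [e1, e2, e3] at key
  convert key using 1
  ring

lemma tendsto_G :
    Tendsto G atTop (𝓝 (2 * ↑(Real.sqrt Real.pi) * Complex.I)) := by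
  have h1 : Tendsto (fun s : ℝ => 2 * ((z s) ^ (-(1/2) : ℂ) * Complex.exp (z s))) atTop (𝓝 0) := by
    apply squeeze_zero_norm' (a := fun s : ℝ => 8 * (Real.exp 1 * Real.exp (-s)))
    · filter_upwards [eventually_ge_atTop (0:ℝ)] with s hs
      rw [norm_mul, norm_mul]
      have h1 : ‖(z s) ^ (-(1/2) : ℂ)‖ ≤ 4 := by
        have := norm_cpow_le hs (c := -(1/2)) (by norm_num) (by norm_num)
        simpa using this
      have h2 : ‖Complex.exp (z s)‖ = Real.exp 1 * Real.exp (-s) := by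
        rw [Complex.norm_exp, z_re, ← Real.exp_add]
        ring_nf
      have : ‖(2:ℂ)‖ = 2 := by simp
      rw [this, h2]
      have hX : (0:ℝ) ≤ Real.exp 1 * Real.exp (-s) := by positivity
      have := mul_le_mul_of_nonneg_right h1 hX
      linarith
    · have := (Real.tendsto_exp_neg_atTop_nhds_zero.const_mul (Real.exp 1)).const_mul (8:ℝ)
      simpa using this
  have h2 : Tendsto (fun s : ℝ => 4 * Eprim ((z s) ^ ((1/2) : ℂ))) atTop
      (𝓝 (4 * -((↑(Real.sqrt Real.pi / 2) : ℂ) * Complex.I))) :=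
    tendsto_Eprim_sqrt_lower.const_mul (4:ℂ)
  have := h1.sub h2
  rw [zero_sub] at this
  have heq : -(4 * -((↑(Real.sqrt Real.pi / 2) : ℂ) * Complex.I))
      = 2 * ↑(Real.sqrt Real.pi) * Complex.I := by
    push_cast
    ring
  rw [heq] at this
  exact this

lemma G_zero : G 0 = 2 * Complex.exp 1 - 4 * Eprim 1 := by
  have hz0 : z 0 = 1 := by simp [z]
  rw [G, hz0]
  norm_num

lemma lower_integral :
    ∫ s in Set.Ioi (0:ℝ), (z s) ^ (-(3/2) : ℂ) * Complex.exp (z s) * (1 + Complex.I)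
      = 2 * ↑(Real.sqrt Real.pi) * Complex.I - (2 * Complex.exp 1 - 4 * Eprim 1) := by
  rw [← G_zero]
  exact integral_Ioi_of_hasDerivAt_of_tendsto' (fun x hx => hasDerivAt_G hx)
    integrand_integrable tendsto_G

end Lower

namespace Upper

noncomputable def z (s : ℝ) : ℂ := (1:ℂ) - ↑s + ↑s * Complex.I

lemma z_re (s : ℝ) : (z s).re = 1 - s := by simp [z]
lemma z_im (s : ℝ) : (z s).im = s := by simp [z]

lemma z_slit {s : ℝ} (hs : 0 ≤ s) : z s ∈ Complex.slitPlane := by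
  rw [Complex.mem_slitPlane_iff, z_re, z_im]
  rcases eq_or_lt_of_le hs with h | h
  · left; rw [← h]; norm_num
  · right; exact h.ne'

lemma z_ne {s : ℝ} (hs : 0 ≤ s) : z s ≠ 0 := Complex.slitPlane_ne_zero (z_slit hs)

lemma z_abs_ge {s : ℝ} (hs : 0 ≤ s) : (1:ℝ)/2 ≤ ‖z s‖ := by
  rcases le_total s (1/2) with h | h
  · calc (1:ℝ)/2 ≤ |(z s).re| := by rw [z_re]; rw [_root_.abs_of_nonneg]; linarith; linarith
      _ ≤ ‖z s‖ := Complex.abs_re_le_norm _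
  · calc (1:ℝ)/2 ≤ |(z s).im| := by rw [z_im, _root_.abs_of_nonneg hs]; linarith
      _ ≤ ‖z s‖ := Complex.abs_im_le_norm _

lemma hasDerivAt_z (s : ℝ) : HasDerivAt z (-1 + Complex.I) s := by
  have h0 : HasDerivAt (fun s : ℝ => (↑s : ℂ)) 1 s := by
    simpa using (hasDerivAt_id s).ofReal_comp
  have := (h0.const_sub 1).add (h0.mul_const Complex.I)
  rw [one_mul] at this
  exact this

lemma norm_cpow_le {s : ℝ} (hs : 0 ≤ s) {c : ℝ} (hc : c ≤ 0) (hc2 : -2 ≤ c) :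
    ‖(z s) ^ (c : ℂ)‖ ≤ 4 := by
  rw [Complex.norm_cpow_of_ne_zero (z_ne hs)]
  simp only [Complex.ofReal_im, Complex.ofReal_re, mul_zero, Real.exp_zero, div_one]
  calc ‖z s‖ ^ c ≤ ((1:ℝ)/2) ^ c :=
        Real.rpow_le_rpow_of_nonpos (by norm_num) (z_abs_ge hs) hc
    _ ≤ ((1:ℝ)/2) ^ (-2 : ℝ) :=
        Real.rpow_le_rpow_of_exponent_ge (by norm_num) (by norm_num) hc2
    _ ≤ 4 := by
        rw [show (-2:ℝ) = ((-2 : ℤ) : ℝ) by norm_num, Real.rpow_intCast]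
        norm_num

lemma norm_integrand_le {s : ℝ} (hs : 0 ≤ s) :
    ‖(z s) ^ (-(3/2) : ℂ) * Complex.exp (z s) * (-1 + Complex.I)‖
      ≤ (8 * Real.exp 1) * Real.exp (-s) := by
  rw [norm_mul, norm_mul]
  have h1 : ‖(z s) ^ (-(3/2) : ℂ)‖ ≤ 4 := by
    have := norm_cpow_le hs (c := -(3/2)) (by norm_num) (by norm_num)
    simpa using this
  have h2 : ‖Complex.exp (z s)‖ = Real.exp 1 * Real.exp (-s) := by
    rw [Complex.norm_exp, z_re, ← Real.exp_add]
    ring_nf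
  have h3 : ‖(-1 + Complex.I)‖ ≤ 2 := by
    calc ‖(-1 + Complex.I)‖ ≤ ‖(-1:ℂ)‖ + ‖Complex.I‖ := norm_add_le _ _
      _ = 2 := by simp; norm_num
  calc ‖(z s) ^ (-(3/2) : ℂ)‖ * ‖Complex.exp (z s)‖ * ‖(-1 + Complex.I)‖
      ≤ 4 * (Real.exp 1 * Real.exp (-s)) * 2 := by
        apply mul_le_mul _ h3 (norm_nonneg _) (by positivity)
        apply mul_le_mul h1 h2.le (norm_nonneg _) (by positivity)
    _ = (8 * Real.exp 1) * Real.exp (-s) := by ring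

lemma integrand_integrable :
    IntegrableOn (fun s : ℝ => (z s) ^ (-(3/2) : ℂ) * Complex.exp (z s) * (-1 + Complex.I))
      (Set.Ioi (0:ℝ)) := by
  apply Integrable.mono' (g := fun s : ℝ => (8 * Real.exp 1) * Real.exp (-s))
  · have : IntegrableOn (fun s : ℝ => Real.exp (-s)) (Set.Ioi (0:ℝ)) := by
      have := exp_neg_integrableOn_Ioi 0 (one_pos)
      simpa using this
    exact this.const_mul _
  · apply ContinuousOn.aestronglyMeasurable _ measurableSet_Ioi
    intro s hs
    have hs' : (0:ℝ) ≤ s := (Set.mem_Ioi.mp hs).le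
    apply ContinuousWithinAt.mul
    apply ContinuousWithinAt.mul
    · exact ((continuousAt_cpow_const (z_slit hs')).comp
        (hasDerivAt_z s).continuousAt).continuousWithinAt
    · exact ((hasDerivAt_z s).continuousAt.cexp).continuousWithinAt
    · exact continuousWithinAt_const
  · rw [ae_restrict_iff' measurableSet_Ioi]
    filter_upwards with s hs
    exact norm_integrand_le (Set.mem_Ioi.mp hs).le

noncomputable def G (s : ℝ) : ℂ :=
  4 * Eprim ((z s) ^ ((1/2) : ℂ)) - 2 * ((z s) ^ (-(1/2) : ℂ) * Complex.exp (z s))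

lemma hasDerivAt_G {s : ℝ} (hs : 0 ≤ s) :
    HasDerivAt G ((z s) ^ (-(3/2) : ℂ) * Complex.exp (z s) * (-1 + Complex.I)) s := by
  have hz := hasDerivAt_z s
  have hslit := z_slit hs
  have hne := z_ne hs
  have h1 : HasDerivAt (fun t : ℝ => z t ^ (-(1/2) : ℂ))
      (-(1/2) * z s ^ (-(1/2) - 1 : ℂ) * (-1 + Complex.I)) s :=
    (Complex.hasStrictDerivAt_cpow_const (c := -(1/2)) hslit).hasDerivAt.comp s hz
  have h2 := hz.cexp
  have h3 : HasDerivAt (fun t : ℝ => z t ^ ((1/2) : ℂ))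
      ((1/2) * z s ^ ((1/2) - 1 : ℂ) * (-1 + Complex.I)) s :=
    (Complex.hasStrictDerivAt_cpow_const (c := (1/2)) hslit).hasDerivAt.comp s hz
  have h4 := (hasDerivAt_Eprim ((z s) ^ ((1/2) : ℂ))).comp s h3
  have h5 := (h4.const_mul (4:ℂ)).sub ((h1.mul h2).const_mul (2:ℂ))
  have key : HasDerivAt G
      (4 * (Complex.exp ((z s ^ ((1/2):ℂ)) ^ 2) * ((1/2) * z s ^ ((1/2) - 1 : ℂ) * (-1 + Complex.I)))
        - 2 * (-(1/2) * z s ^ (-(1/2) - 1 : ℂ) * (-1 + Complex.I) * Complex.exp (z s)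
          + z s ^ (-(1/2) : ℂ) * (Complex.exp (z s) * (-1 + Complex.I)))) s := h5
  have e1 : (-(1/2) : ℂ) - 1 = -(3/2) := by norm_num
  have e2 : ((1/2) : ℂ) - 1 = -(1/2) := by norm_num
  have e3 : ((z s) ^ ((1/2):ℂ)) ^ 2 = z s := by
    rw [pow_two, ← Complex.cpow_add _ _ hne]
    norm_num
  rw [e1, e2, e3] at key
  convert key using 1
  ring

lemma tendsto_G :
    Tendsto G atTop (𝓝 (2 * ↑(Real.sqrt Real.pi) * Complex.I)) := by
  have h1 : Tendsto (fun s : ℝ => 2 * ((z s) ^ (-(1/2) : ℂ) * Complex.exp (z s))) atTop (𝓝 0) := by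
    apply squeeze_zero_norm' (a := fun s : ℝ => 8 * (Real.exp 1 * Real.exp (-s)))
    · filter_upwards [eventually_ge_atTop (0:ℝ)] with s hs
      rw [norm_mul, norm_mul]
      have h1 : ‖(z s) ^ (-(1/2) : ℂ)‖ ≤ 4 := by
        have := norm_cpow_le hs (c := -(1/2)) (by norm_num) (by norm_num)
        simpa using this
      have h2 : ‖Complex.exp (z s)‖ = Real.exp 1 * Real.exp (-s) := by
        rw [Complex.norm_exp, z_re, ← Real.exp_add]
        ring_nf
      have : ‖(2:ℂ)‖ = 2 := by norm_num
      rw [this, h2]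
      have hX : (0:ℝ) ≤ Real.exp 1 * Real.exp (-s) := by positivity
      have := mul_le_mul_of_nonneg_right h1 hX
      linarith
    · have := (Real.tendsto_exp_neg_atTop_nhds_zero.const_mul (Real.exp 1)).const_mul (8:ℝ)
      simpa using this
  have h2 : Tendsto (fun s : ℝ => 4 * Eprim ((z s) ^ ((1/2) : ℂ))) atTop
      (𝓝 (4 * ((↑(Real.sqrt Real.pi / 2) : ℂ) * Complex.I))) :=
    tendsto_Eprim_sqrt_upper.const_mul (4:ℂ)
  have := h2.sub h1
  rw [sub_zero] at this
  have heq : (4 : ℂ) * ((↑(Real.sqrt Real.pi / 2) : ℂ) * Complex.I)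
      = 2 * ↑(Real.sqrt Real.pi) * Complex.I := by
    push_cast
    ring
  rw [heq] at this
  exact this

lemma G_zero : G 0 = 4 * Eprim 1 - 2 * Complex.exp 1 := by
  have hz0 : z 0 = 1 := by simp [z]
  rw [G, hz0]
  norm_num

lemma upper_integral :
    ∫ s in Set.Ioi (0:ℝ), (z s) ^ (-(3/2) : ℂ) * Complex.exp (z s) * (-1 + Complex.I)
      = 2 * ↑(Real.sqrt Real.pi) * Complex.I - (4 * Eprim 1 - 2 * Complex.exp 1) := by
  rw [← G_zero]
  exact integral_Ioi_of_hasDerivAt_of_tendsto' (fun x hx => hasDerivAt_G hx)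
    integrand_integrable tendsto_G

end Upper

/-- Hankel-type contour integral: `(1/(2πi)) ∫_{Γ(1)} z^{-3/2} e^z dz = 2/√π`,
where `Γ(1) = {1-s+is : s ≥ 0} ∪ {1-s-is : s ≥ 0}` is traversed with increasing
imaginary part (parametrized below: on the lower ray `z = 1-s-is`, `dz = (1+i)ds`
as `s` decreases from `∞` to `0`, and on the upper ray `z = 1-s+is`,
`dz = (-1+i)ds` as `s` increases from `0` to `∞`), and `z^{-3/2}` is the
principal branch.  This equals `1/Γ(3/2) = 2/√π`. -/
theorem hankel_contour_integral :
    (1 / (2 * Real.pi * Complex.I)) *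
        ((∫ s in Set.Ioi (0 : ℝ),
            ((1 : ℂ) - s - s * Complex.I) ^ (-(3/2) : ℂ) *
              Complex.exp ((1 : ℂ) - s - s * Complex.I) * (1 + Complex.I)) +
          ∫ s in Set.Ioi (0 : ℝ),
            ((1 : ℂ) - s + s * Complex.I) ^ (-(3/2) : ℂ) *
              Complex.exp ((1 : ℂ) - s + s * Complex.I) * (-1 + Complex.I)) =
      ((2 / Real.sqrt Real.pi : ℝ) : ℂ) := by
  have hl := Lower.lower_integral
  have hu := Upper.upper_integral
  simp only [Lower.z] at hl
  simp only [Upper.z] at hu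
  rw [hl, hu]
  have hπ := Real.pi_pos
  have h1 : (↑Real.pi : ℂ) ≠ 0 := Complex.ofReal_ne_zero.mpr hπ.ne'
  have hs : (↑(Real.sqrt Real.pi) : ℂ) ≠ 0 :=
    Complex.ofReal_ne_zero.mpr (Real.sqrt_pos.mpr hπ).ne'
  have hss : (↑(Real.sqrt Real.pi) : ℂ) * ↑(Real.sqrt Real.pi) = ↑Real.pi := by
    rw [← Complex.ofReal_mul, Real.mul_self_sqrt hπ.le]
  have hI := Complex.I_ne_zero
  push_cast
  field_simp
  linear_combination (4 * Complex.I) * hss
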